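/- Let K be a real m × n matrix, B ∈ ℝ^m, A = {ϑ ∈ ℝⁿ : ϑ ≥ 0, K ϑ = B}, and c : ℝⁿ → ℝⁿ. Suppose ϑ̄ ∈ A satisfies ϑ̄ > 0 componentwise and ⟨c(ϑ̄), ϑ̄ − ϑ⟩ ≤ 0 for all ϑ ∈ A, and suppose K H(ϑ̄)⁻¹ Kᵀ is invertible, where H(y) = diag(1/y₁, …, 1/yₙ). Then ϑ̄ is an equilibrium point of the Hessian Riemannian flow: F(ϑ̄) c(ϑ̄) = 0, where F(y) = I − Kᵀ (K H(y)⁻¹ Kᵀ)⁻¹ K H(y)⁻¹; in particular H(ϑ̄)⁻¹ F(ϑ̄) c(ϑ̄) = 0. -/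
import Mathlib


open Matrix

/-- The Hessian of the entropy `h(y) = Σ y_k log y_k`: `H(y) = diag(1/y₁, …, 1/yₙ)`. -/
noncomputable def entropyHessian (n : ℕ) (y : Fin n → ℝ) : Matrix (Fin n) (Fin n) ℝ :=
  Matrix.diagonal fun k => (y k)⁻¹

/-- The Hessian–Riemannian projection matrix
`F(y) = I − Kᵀ (K H(y)⁻¹ Kᵀ)⁻¹ K H(y)⁻¹`. -/
noncomputable def projMatrix (n m : ℕ) (K : Matrix (Fin m) (Fin n) ℝ)
    (y : Fin n → ℝ) : Matrix (Fin n) (Fin n) ℝ :=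
  1 - Kᵀ * (K * (entropyHessian n y)⁻¹ * Kᵀ)⁻¹ * (K * (entropyHessian n y)⁻¹)

/-- An interior Wardrop equilibrium `ϑ̄ > 0` on `A = {ϑ : ϑ ≥ 0, K ϑ = B}` is an
equilibrium point of the Hessian–Riemannian flow: `F(ϑ̄) c(ϑ̄) = 0`, and in
particular `H(ϑ̄)⁻¹ F(ϑ̄) c(ϑ̄) = 0`. -/
theorem equilibrium_point_of_flow (n m : ℕ) (K : Matrix (Fin m) (Fin n) ℝ)
    (B : Fin m → ℝ) (A : Set (Fin n → ℝ))
    (hA : A = {ϑ : Fin n → ℝ | (∀ k, 0 ≤ ϑ k) ∧ K.mulVec ϑ = B})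
    (c : (Fin n → ℝ) → (Fin n → ℝ))
    (ϑbar : Fin n → ℝ) (hmem : ϑbar ∈ A) (hpos : ∀ k, 0 < ϑbar k)
    (hVI : ∀ ϑ ∈ A, ∑ k, c ϑbar k * (ϑbar k - ϑ k) ≤ 0)
    (hinv : IsUnit (K * (entropyHessian n ϑbar)⁻¹ * Kᵀ)) :
    (projMatrix n m K ϑbar).mulVec (c ϑbar) = 0 ∧
    (entropyHessian n ϑbar)⁻¹.mulVec ((projMatrix n m K ϑbar).mulVec (c ϑbar)) = 0 := by
  rcases isEmpty_or_nonempty (Fin n) with hE | hNE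
  · exact ⟨Subsingleton.elim _ _, Subsingleton.elim _ _⟩
  obtain ⟨hnn, hKb⟩ : (∀ k, 0 ≤ ϑbar k) ∧ K.mulVec ϑbar = B := by rwa [hA] at hmem
  set H := entropyHessian n ϑbar with hH
  have hHinv : H⁻¹ = Matrix.diagonal ϑbar := by
    apply Matrix.inv_eq_right_inv
    rw [hH, entropyHessian, Matrix.diagonal_mul_diagonal]
    rw [show (fun k => (ϑbar k)⁻¹ * ϑbar k) = fun _ => (1:ℝ) from
      funext fun k => inv_mul_cancel₀ (hpos k).ne', Matrix.diagonal_one]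
  have key : ∀ v : Fin n → ℝ, K.mulVec v = 0 → ∑ k, c ϑbar k * v k = 0 := by
    intro v hv
    set ε : ℝ := Finset.univ.inf' Finset.univ_nonempty (fun k => ϑbar k / (|v k| + 1)) with hε
    have hεpos : 0 < ε := by
      rw [hε, Finset.lt_inf'_iff]
      intro k _
      exact div_pos (hpos k) (by positivity)
    have hεle : ∀ k, ε * (|v k| + 1) ≤ ϑbar k := by
      intro k
      have h1 : ε ≤ ϑbar k / (|v k| + 1) := Finset.inf'_le _ (Finset.mem_univ k)
      have h2 : (0:ℝ) < |v k| + 1 := by positivity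
      rw [le_div_iff₀ h2] at h1
      exact h1
    have hmemt : ∀ t : ℝ, |t| ≤ ε → (ϑbar + t • v) ∈ A := by
      intro t ht
      rw [hA]
      constructor
      · intro k
        have h1 : |t * v k| ≤ ε * (|v k| + 1) := by
          rw [abs_mul]
          have : |t| * |v k| ≤ ε * |v k| := by
            apply mul_le_mul_of_nonneg_right ht (abs_nonneg _)
          nlinarith [hεpos]
        have h2 := hεle k
        have h3 := neg_abs_le (t * v k)
        simp only [Pi.add_apply, Pi.smul_apply, smul_eq_mul]
        linarith
      · rw [Matrix.mulVec_add, Matrix.mulVec_smul, hv, hKb]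
        simp
    have h1 := hVI _ (hmemt ε (by rw [abs_of_pos hεpos]))
    have h2 := hVI _ (hmemt (-ε) (by rw [abs_neg, abs_of_pos hεpos]))
    have e1 : ∀ t : ℝ, ∑ k, c ϑbar k * (ϑbar k - (ϑbar + t • v) k)
        = -t * ∑ k, c ϑbar k * v k := by
      intro t
      rw [Finset.mul_sum]
      apply Finset.sum_congr rfl
      intro k _
      simp only [Pi.add_apply, Pi.smul_apply, smul_eq_mul]
      ring
    rw [e1] at h1 h2
    nlinarith [h1, h2, hεpos]
  set w := (projMatrix n m K ϑbar).mulVec (c ϑbar) with hwdef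
  have hMinv : (K * H⁻¹ * Kᵀ) * (K * H⁻¹ * Kᵀ)⁻¹ = 1 :=
    Matrix.mul_nonsing_inv _ ((Matrix.isUnit_iff_isUnit_det _).mp hinv)
  have hKHP : K * H⁻¹ * projMatrix n m K ϑbar = 0 := by
    rw [projMatrix, ← hH, Matrix.mul_sub, Matrix.mul_one]
    have : K * H⁻¹ * (Kᵀ * (K * H⁻¹ * Kᵀ)⁻¹ * (K * H⁻¹))
        = (K * H⁻¹ * Kᵀ) * (K * H⁻¹ * Kᵀ)⁻¹ * (K * H⁻¹) := by
      simp only [Matrix.mul_assoc]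
    rw [this, hMinv, Matrix.one_mul, sub_self]
  have hKHw : K.mulVec (H⁻¹.mulVec w) = 0 := by
    rw [hwdef, Matrix.mulVec_mulVec, Matrix.mulVec_mulVec, hKHP, Matrix.zero_mulVec]
  have hc0 : ∑ k, c ϑbar k * (H⁻¹.mulVec w) k = 0 := key _ hKHw
  have hw : w = c ϑbar - (Kᵀ * (K * H⁻¹ * Kᵀ)⁻¹ * (K * H⁻¹)).mulVec (c ϑbar) := by
    rw [hwdef, projMatrix, ← hH, Matrix.sub_mulVec, Matrix.one_mulVec]
  have hdot : ∑ k, (c ϑbar k - w k) * (H⁻¹.mulVec w) k = 0 := by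
    have hcw : (fun k => c ϑbar k - w k)
        = Kᵀ.mulVec (((K * H⁻¹ * Kᵀ)⁻¹ * (K * H⁻¹)).mulVec (c ϑbar)) := by
      funext k
      rw [hw]
      simp [Matrix.mulVec_mulVec, Matrix.mul_assoc]
    calc ∑ k, (c ϑbar k - w k) * (H⁻¹.mulVec w) k
        = (fun k => c ϑbar k - w k) ⬝ᵥ (H⁻¹.mulVec w) := rfl
      _ = Kᵀ.mulVec (((K * H⁻¹ * Kᵀ)⁻¹ * (K * H⁻¹)).mulVec (c ϑbar)) ⬝ᵥ (H⁻¹.mulVec w) := by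
          rw [hcw]
      _ = (((K * H⁻¹ * Kᵀ)⁻¹ * (K * H⁻¹)).mulVec (c ϑbar)) ⬝ᵥ K.mulVec (H⁻¹.mulVec w) := by
          rw [Matrix.mulVec_transpose, ← Matrix.dotProduct_mulVec]
      _ = 0 := by rw [hKHw, dotProduct_zero]
  have hsq : ∑ k, ϑbar k * (w k)^2 = 0 := by
    have e : ∀ k, ϑbar k * (w k)^2 = w k * (H⁻¹.mulVec w) k := by
      intro k
      rw [hHinv, Matrix.mulVec_diagonal]
      ring
    have : ∑ k, w k * (H⁻¹.mulVec w) k = 0 := by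
      have := hdot
      have h2 := hc0
      have expand : ∑ k, (c ϑbar k - w k) * (H⁻¹.mulVec w) k
          = ∑ k, c ϑbar k * (H⁻¹.mulVec w) k - ∑ k, w k * (H⁻¹.mulVec w) k := by
        rw [← Finset.sum_sub_distrib]
        apply Finset.sum_congr rfl
        intro k _
        ring
      rw [expand, h2] at this
      linarith
    rw [← this]
    exact Finset.sum_congr rfl fun k _ => e k
  have hw0 : w = 0 := by
    funext k
    have hterm : ∀ i ∈ Finset.univ, (0:ℝ) ≤ ϑbar i * (w i)^2 :=
      fun i _ => mul_nonneg (hpos i).le (sq_nonneg _)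
    have := (Finset.sum_eq_zero_iff_of_nonneg hterm).mp hsq k (Finset.mem_univ k)
    have hne := (hpos k).ne'
    have : (w k)^2 = 0 := by
      rcases mul_eq_zero.mp this with h | h
      · exact absurd h hne
      · exact h
    simpa using pow_eq_zero_iff (n := 2) (by norm_num) |>.mp this
  exact ⟨hw0, by rw [hw0, Matrix.mulVec_zero]⟩
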